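/- Let S = (s_{ij}) be a symmetric l×l integer matrix with zero diagonal, let π(S) = ∏_{1≤i<j≤l}(z_i−z_j)^{s_{ij}} ∈ Φ^l, and set s_i = Σ_j s_{ij} (the i-th row sum). Then for any integers n₁,…,n_l one has Δ*(n₁,…,n_l)(π(S)) = ((n₁+s₁)z₁ + ⋯ + (n_l+s_l)z_l)·π(S). In particular, π(S) is (n₁,…,n_l)-regular if and only if s_i = −n_i for every i = 1,…,l. -/
import Mathlib


open scoped Classical

noncomputable section

namespace Griess

open MvPolynomial

variable {k : Type} [Field k]

/-- The field `k(z₁,…,z_l)` of rational functions over `k` in `l` variables. -/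
abbrev RF (k : Type) [Field k] (l : ℕ) : Type := FractionRing (MvPolynomial (Fin l) k)

/-- The variable `zᵢ` as an element of the rational function field. -/
def zv {k : Type} [Field k] {l : ℕ} (i : Fin l) : RF k l :=
  algebraMap (MvPolynomial (Fin l) k) (RF k l) (MvPolynomial.X i)

/-- The space `Φ^l` of rational functions of the form
`p(z₁,…,z_l) · ∏_{i<j} (zᵢ - z_j)^{k_{ij}}`. -/
def Phi (k : Type) [Field k] (l : ℕ) : Set (RF k l) :=
  { x | ∃ (p : MvPolynomial (Fin l) k) (e : Fin l → Fin l → ℤ),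
      x = algebraMap (MvPolynomial (Fin l) k) (RF k l) p *
        ∏ i : Fin l, ∏ j : Fin l, (if i < j then (zv i - zv j) ^ e i j else 1) }

/-- `D` is the family of partial derivative operators `∂_{z₁},…,∂_{z_l}`:
a family of `k`-linear derivations with `D i (z j) = δ_{ij}`. -/
def IsPartialDeriv {l : ℕ} (D : Fin l → Derivation k (RF k l) (RF k l)) : Prop :=
  ∀ i j : Fin l, D i (zv j) = if j = i then 1 else 0

/-- The operator `Δ = Σᵢ ∂_{zᵢ}`. -/
def Delta {l : ℕ} (D : Fin l → Derivation k (RF k l) (RF k l)) (α : RF k l) : RF k l :=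
  ∑ i, D i α

/-- The operator `Δ*(n₁,…,n_l) = Σᵢ (zᵢ² ∂_{zᵢ} + nᵢ zᵢ)`. -/
def DeltaStar {l : ℕ} (D : Fin l → Derivation k (RF k l) (RF k l)) (n : Fin l → ℤ)
    (α : RF k l) : RF k l :=
  ∑ i, ((zv i) ^ 2 * D i α + (n i : RF k l) * zv i * α)

section Subst

variable {l : ℕ}

/-- The embedding of polynomials in `z₁,…,z_l` into rational functions of
`z₁,…,z_l` and one extra variable `t` (`= RatFunc.X`). -/
def toRatFuncHom (k : Type) [Field k] (l : ℕ) :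
    Polynomial (MvPolynomial (Fin l) k) →+* RatFunc (RF k l) :=
  (algebraMap (Polynomial (RF k l)) (RatFunc (RF k l))).comp
    (Polynomial.mapRingHom (algebraMap (MvPolynomial (Fin l) k) (RF k l)))

lemma toRatFuncHom_injective : Function.Injective (toRatFuncHom k l) := by
  have h1 : Function.Injective (algebraMap (Polynomial (RF k l)) (RatFunc (RF k l))) :=
    IsFractionRing.injective _ _
  have h2 : Function.Injective
      (Polynomial.mapRingHom (algebraMap (MvPolynomial (Fin l) k) (RF k l))) :=
    Polynomial.map_injective _ (IsFractionRing.injective _ _)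
  exact fun a b hab => h2 (h1 hab)

/-- Polynomial level substitution `z_j ↦ t·z_j` for `j ∈ J`. -/
def scaleAux (k : Type) [Field k] (l : ℕ) (J : Finset (Fin l)) :
    MvPolynomial (Fin l) k →+* Polynomial (MvPolynomial (Fin l) k) :=
  (MvPolynomial.aeval (R := k) fun i =>
    if i ∈ J then Polynomial.X * Polynomial.C (MvPolynomial.X i)
    else Polynomial.C (MvPolynomial.X i)).toRingHom

lemma scaleAux_injective (J : Finset (Fin l)) :
    Function.Injective (scaleAux k l J) := by
  have h : (Polynomial.evalRingHom (1 : MvPolynomial (Fin l) k)).comp (scaleAux k l J)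
      = RingHom.id _ := by
    apply MvPolynomial.ringHom_ext
    · intro r; simp [scaleAux]
    · intro i; by_cases hi : i ∈ J <;> simp [scaleAux, hi]
  intro p q hpq
  have hp := DFunLike.congr_fun h p
  have hq := DFunLike.congr_fun h q
  simp only [RingHom.comp_apply, RingHom.id_apply] at hp hq
  rw [← hp, ← hq, hpq]

/-- The substitution `z_j ↦ t·z_j` (for `j ∈ J`), as a map from rational functions
in `z₁,…,z_l` to rational functions in `z₁,…,z_l` and `t`.  Reading off the
coefficients of the Laurent expansion in `t` at `t = 0` of `scaleJ J α` yields the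
decomposition of `α` into its homogeneous components with respect to the total degree
in the variables `{z_j : j ∈ J}`, i.e. the expansion of `α` in the domain where the
variables of `J` are much smaller than the remaining variables. -/
def scaleJ (J : Finset (Fin l)) : RF k l →+* RatFunc (RF k l) :=
  IsFractionRing.lift (g := (toRatFuncHom k l).comp (scaleAux k l J))
    (fun a b hab => scaleAux_injective J (toRatFuncHom_injective hab))

/-- Polynomial level substitution `z_i ↦ z_j + t`. -/
def subPairAux (k : Type) [Field k] (l : ℕ) (i j : Fin l) :
    MvPolynomial (Fin l) k →+* Polynomial (MvPolynomial (Fin l) k) :=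
  (MvPolynomial.aeval (R := k) fun s =>
    if s = i then Polynomial.X + Polynomial.C (MvPolynomial.X j)
    else Polynomial.C (MvPolynomial.X s)).toRingHom

lemma subPairAux_injective (i j : Fin l) :
    Function.Injective (subPairAux k l i j) := by
  have h : (Polynomial.evalRingHom (MvPolynomial.X i - MvPolynomial.X j)).comp
      (subPairAux k l i j) = RingHom.id _ := by
    apply MvPolynomial.ringHom_ext
    · intro r; simp [subPairAux]
    · intro s; by_cases hs : s = i <;> simp [subPairAux, hs]
  intro p q hpq
  have hp := DFunLike.congr_fun h p
  have hq := DFunLike.congr_fun h q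
  simp only [RingHom.comp_apply, RingHom.id_apply] at hp hq
  rw [← hp, ← hq, hpq]

/-- The substitution `z_i ↦ z_j + t`, as a map from rational functions in `z₁,…,z_l`
to rational functions in the variables `z₁,…,z_l` and `t`.  Reading off the Laurent
coefficients in `t` at `t = 0` yields the expansion of a rational function in powers
of `z_i - z_j`, with coefficients not involving `z_i`. -/
def subPair (i j : Fin l) : RF k l →+* RatFunc (RF k l) :=
  IsFractionRing.lift (g := (toRatFuncHom k l).comp (subPairAux k l i j))
    (fun a b hab => subPairAux_injective i j (toRatFuncHom_injective hab))

end Subst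

/-- The coefficient of `tᵐ` in the Laurent expansion at `t = 0` of a rational
function of `t`. -/
def lcoeff {L : Type} [Field L] (m : ℤ) (f : RatFunc L) : L :=
  (f : LaurentSeries L).coeff m

/-- The component `(α)_n` of `α` of degree `n` with respect to the partition
`{1,…,l} = Jᶜ ⊔ J` and the weights `d`:  the part of the expansion of `α` in the
domain where the variables of `J` are much smaller than those of `Jᶜ` whose total
degree in the variables `{z_j : j ∈ J}` equals `n - Σ_{j∈J} d_j`. -/
def component {l : ℕ} (J : Finset (Fin l)) (d : Fin l → ℤ) (n : ℤ) (α : RF k l) :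
    RF k l :=
  lcoeff (n - ∑ j ∈ J, d j) (scaleJ J α)

/-- `α` is homogeneous of total degree `d` in the variables `{z_i : i ∈ S}`:
substituting `z_i ↦ t·z_i` for `i ∈ S` multiplies `α` by `t^d`. -/
def IsHomogeneousOn {l : ℕ} (S : Finset (Fin l)) (d : ℤ) (α : RF k l) : Prop :=
  scaleJ S α = RatFunc.X ^ d * RatFunc.C α

/-- `ρ^{(m)}_{ij} α`: the coefficient of `(z_i - z_j)^m` in the expansion of `α`
in powers of `z_i - z_j` (the coefficients do not involve `z_i`). -/
def rho {l : ℕ} (i j : Fin l) (m : ℤ) (α : RF k l) : RF k l :=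
  lcoeff m (subPair i j α)

/-- `α` is a rational function of the variables `{z_i : i ∈ S}` only. -/
def dependsOnlyOn {l : ℕ} (S : Finset (Fin l)) (α : RF k l) : Prop :=
  α ∈ Subfield.closure (Set.range (algebraMap k (RF k l)) ∪ {x | ∃ i ∈ S, x = zv i})

/-- `α` is an admissible function of the variables `{z_i : i ∈ S}` (the space
`R^{|S|}`):  `α ∈ Φ` is a rational function of the variables of `S` only, it is
`(4,…,4)`-regular and homogeneous of degree `-2|S|` in these variables, and all its
components of negative degree, as well as those of degree `1`, vanish (with respect
to every partition of `S` and all weights equal to `2`). -/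
def Admissible {l : ℕ} (D : Fin l → Derivation k (RF k l) (RF k l)) (S : Finset (Fin l))
    (α : RF k l) : Prop :=
  α ∈ Phi k l ∧ dependsOnlyOn S α ∧
    (∑ i ∈ S, ((zv i) ^ 2 * D i α + 4 * zv i * α)) = 0 ∧
    IsHomogeneousOn S (-(2 * (S.card : ℤ))) α ∧
    ∀ J ⊆ S, ∀ n : ℤ, (n < 0 ∨ n = 1) → component J (fun _ => 2) n α = 0

/-- `α` is an indecomposable admissible function of the variables `{z_i : i ∈ S}`
(the space `R₀^{|S|}`): admissible, and all the components `(α)₀` with respect to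
partitions of `S` into two nonempty parts vanish. -/
def AdmissibleInd {l : ℕ} (D : Fin l → Derivation k (RF k l) (RF k l))
    (S : Finset (Fin l)) (α : RF k l) : Prop :=
  Admissible D S α ∧
    ∀ J ⊆ S, J ≠ ∅ → J ≠ S → component J (fun _ => 2) 0 α = 0

section Shift

variable {l : ℕ}

/-- Polynomial level substitution `z_s ↦ z_s - z_t` for `s ∈ S`. -/
def shiftAuxP (k : Type) [Field k] (l : ℕ) (S : Finset (Fin l)) (t : Fin l) :
    MvPolynomial (Fin l) k →+* MvPolynomial (Fin l) k :=
  (MvPolynomial.aeval (R := k) fun s =>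
    if s ∈ S then MvPolynomial.X s - MvPolynomial.X t else MvPolynomial.X s).toRingHom

lemma shiftAuxP_injective (S : Finset (Fin l)) (t : Fin l) (ht : t ∉ S) :
    Function.Injective (shiftAuxP k l S t) := by
  have h : ((MvPolynomial.aeval (R := k) fun s =>
      if s ∈ S then MvPolynomial.X s + MvPolynomial.X t
      else MvPolynomial.X s).toRingHom).comp (shiftAuxP k l S t) = RingHom.id _ := by
    apply MvPolynomial.ringHom_ext
    · intro r; simp [shiftAuxP]
    · intro s
      by_cases hs : s ∈ S
      · have hst : s ≠ t := fun hst => ht (hst ▸ hs)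
        simp [shiftAuxP, hs, ht]
      · simp [shiftAuxP, hs]
  intro p q hpq
  have hp := DFunLike.congr_fun h p
  have hq := DFunLike.congr_fun h q
  simp only [RingHom.comp_apply, RingHom.id_apply] at hp hq
  rw [← hp, ← hq, hpq]

/-- The shift operator substituting `z_s - z_t` for `z_s`, for all `s ∈ S`. -/
def shiftT (S : Finset (Fin l)) (t : Fin l) (ht : t ∉ S) : RF k l →+* RF k l :=
  IsFractionRing.lift
    (g := (algebraMap (MvPolynomial (Fin l) k) (RF k l)).comp (shiftAuxP k l S t))
    (fun a b hab =>
      shiftAuxP_injective S t ht (IsFractionRing.injective _ _ hab))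

/-- The operator `ℰ = Σ_{s ∈ S} (-z_s⁻¹ ∂_{z_s} + 2 z_s⁻²)`. -/
def curlyE {l : ℕ} (D : Fin l → Derivation k (RF k l) (RF k l)) (S : Finset (Fin l))
    (β : RF k l) : RF k l :=
  ∑ s ∈ S, (-((zv s)⁻¹ * D s β) + 2 * (zv s) ^ (-2 : ℤ) * β)

end Shift

end Griess

namespace Griess

/-- `π(S) = ∏_{1≤i<j≤l} (z_i - z_j)^{s_{ij}}` for an integer matrix `S = (s_{ij})`. -/
def piMat {k : Type} [Field k] {l : ℕ} (s : Fin l → Fin l → ℤ) : RF k l :=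
  ∏ i : Fin l, ∏ j : Fin l, (if i < j then (zv i - zv j) ^ s i j else 1)

section Aux

variable {k : Type} [Field k] {l : ℕ}

lemma zv_sub_ne_zero {i j : Fin l} (h : i ≠ j) : (zv i - zv j : RF k l) ≠ 0 := by
  refine sub_ne_zero.mpr fun hx => h ?_
  exact MvPolynomial.X_injective
    (IsFractionRing.injective (MvPolynomial (Fin l) k) (RF k l) hx)

lemma deriv_prod_zpow (D : Derivation k (RF k l) (RF k l)) {ι : Type}
    (T : Finset ι) (u : ι → RF k l) (e : ι → ℤ) (hu : ∀ a ∈ T, u a ≠ 0) :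
    D (∏ a ∈ T, u a ^ e a) =
      (∏ a ∈ T, u a ^ e a) * ∑ a ∈ T, (e a : RF k l) * (u a)⁻¹ * D (u a) := by
  classical
  induction T using Finset.induction_on with
  | empty => simp
  | @insert a T' ha ih =>
    rw [Finset.prod_insert ha, Finset.sum_insert ha, Derivation.leibniz,
      ih (fun b hb => hu b (Finset.mem_insert_of_mem hb)),
      Derivation.leibniz_zpow]
    have hune : u a ≠ 0 := hu a (Finset.mem_insert_self a T')
    rw [zpow_sub_one₀ hune]
    simp only [smul_eq_mul, zsmul_eq_mul]
    ring

/-- The set of pairs `(i,j)` with `i < j`. -/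
def pairSet (l : ℕ) : Finset (Fin l × Fin l) :=
  Finset.univ.filter (fun p => p.1 < p.2)

lemma piMat_eq (s : Fin l → Fin l → ℤ) :
    (piMat s : RF k l) = ∏ p ∈ pairSet l, (zv p.1 - zv p.2) ^ s p.1 p.2 := by
  rw [piMat, pairSet, Finset.prod_filter, ← Finset.univ_product_univ,
    Finset.prod_product]

lemma zv_linIndep [CharZero k] {c : Fin l → ℤ}
    (h : ∑ i, ((c i : ℤ) : RF k l) * zv i = 0) : ∀ i, c i = 0 := by
  have hq : (∑ i, ((c i : ℤ) : MvPolynomial (Fin l) k) * MvPolynomial.X i) = 0 := by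
    apply IsFractionRing.injective (MvPolynomial (Fin l) k) (RF k l)
    rw [map_sum, map_zero]
    simpa [zv] using h
  intro i
  have hc := congrArg (MvPolynomial.coeff (Finsupp.single i 1)) hq
  have hcast : ∀ j : Fin l, ((c j : ℤ) : MvPolynomial (Fin l) k)
      = MvPolynomial.C ((c j : ℤ) : k) := by
    intro j; rw [map_intCast]
  simp only [MvPolynomial.coeff_sum, hcast, MvPolynomial.coeff_C_mul,
    MvPolynomial.coeff_X', MvPolynomial.coeff_zero,
    Finsupp.single_left_inj (one_ne_zero : (1 : ℕ) ≠ 0)] at hc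
  rw [Finset.sum_eq_single i (fun b _ hb => by simp [hb]) (by simp)] at hc
  simpa using hc

end Aux

set_option maxHeartbeats 2000000

/-- for a symmetric integer matrix `S` with zero diagonal,
`Δ*(n₁,…,n_l)(π(S)) = ((n₁+s₁)z₁ + ⋯ + (n_l+s_l)z_l)·π(S)` where `sᵢ` is the `i`-th
row sum; in particular `π(S)` is `(n₁,…,n_l)`-regular iff `sᵢ = -nᵢ` for all `i`. -/
theorem statement0 {k : Type} [Field k] [CharZero k] {l : ℕ}
    (D : Fin l → Derivation k (RF k l) (RF k l)) (hD : IsPartialDeriv D)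
    (s : Fin l → Fin l → ℤ) (hsym : ∀ i j, s i j = s j i) (hdiag : ∀ i, s i i = 0)
    (n : Fin l → ℤ) :
    DeltaStar D n (piMat s) =
      (∑ i, ((n i + ∑ j, s i j : ℤ) : RF k l) * zv i) * piMat s ∧
    (DeltaStar D n (piMat s) = 0 ↔ ∀ i, (∑ j, s i j) = - n i) := by
  classical
  set π : RF k l := piMat s with hπ
  have hne : ∀ p ∈ pairSet l, (zv p.1 - zv p.2 : RF k l) ≠ 0 := by
    intro p hp
    exact zv_sub_ne_zero (ne_of_lt (Finset.mem_filter.mp hp).2)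
  have hπne : π ≠ 0 := by
    rw [hπ, piMat_eq]
    exact Finset.prod_ne_zero_iff.mpr fun p hp => zpow_ne_zero _ (hne p hp)
  have hDi : ∀ i, D i π = π * ∑ p ∈ pairSet l, (s p.1 p.2 : RF k l) *
      (zv p.1 - zv p.2)⁻¹ *
      ((if p.1 = i then 1 else 0) - (if p.2 = i then 1 else 0)) := by
    intro i
    rw [hπ, piMat_eq, deriv_prod_zpow _ _ _ _ hne]
    congr 1
    refine Finset.sum_congr rfl fun p hp => ?_
    rw [map_sub, hD i p.1, hD i p.2]
  have hsum1 : (∑ i, (zv i : RF k l) ^ 2 * D i π)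
      = π * ∑ p ∈ pairSet l, (s p.1 p.2 : RF k l) * (zv p.1 + zv p.2) := by
    simp only [hDi, Finset.mul_sum]
    rw [Finset.sum_comm]
    refine Finset.sum_congr rfl fun p hp => ?_
    have hne' := hne p hp
    have key : (∑ i, (zv i : RF k l) ^ 2 *
        (π * ((s p.1 p.2 : RF k l) * (zv p.1 - zv p.2)⁻¹ *
          ((if p.1 = i then 1 else 0) - (if p.2 = i then 1 else 0)))))
        = π * ((s p.1 p.2 : RF k l) * (zv p.1 - zv p.2)⁻¹ *
            ((zv p.1) ^ 2 - (zv p.2) ^ 2)) := by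
      have step : ∀ i : Fin l, (zv i : RF k l) ^ 2 *
          (π * ((s p.1 p.2 : RF k l) * (zv p.1 - zv p.2)⁻¹ *
            ((if p.1 = i then 1 else 0) - (if p.2 = i then 1 else 0))))
          = π * ((s p.1 p.2 : RF k l) * (zv p.1 - zv p.2)⁻¹) *
              ((zv i) ^ 2 * ((if p.1 = i then 1 else 0) - (if p.2 = i then 1 else 0))) := by
        intro i; ring
      rw [Finset.sum_congr rfl fun i _ => step i, ← Finset.mul_sum]
      have hin : (∑ i, (zv i : RF k l) ^ 2 *
          ((if p.1 = i then 1 else 0) - (if p.2 = i then 1 else 0)))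
          = (zv p.1) ^ 2 - (zv p.2) ^ 2 := by
        simp [mul_sub, mul_ite, Finset.sum_sub_distrib, Finset.sum_ite_eq]
      rw [hin]; ring
    rw [key]
    have hfac : ((zv p.1 : RF k l)) ^ 2 - (zv p.2) ^ 2
        = (zv p.1 - zv p.2) * (zv p.1 + zv p.2) := by ring
    rw [hfac, mul_assoc ((s p.1 p.2 : RF k l)), inv_mul_cancel_left₀ hne']
  have hA : (∑ p ∈ pairSet l, (s p.1 p.2 : RF k l) * (zv p.1 + zv p.2))
      = ∑ i, ((∑ j, s i j : ℤ) : RF k l) * zv i := by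
    rw [pairSet, Finset.sum_filter, ← Finset.univ_product_univ, Finset.sum_product]
    have h2 : ∀ i j : Fin l,
        (if i < j then (s i j : RF k l) * (zv i + zv j) else 0)
        = (if i < j then (s i j : RF k l) * zv i else 0)
          + (if i < j then (s i j : RF k l) * zv j else 0) := by
      intro i j; split_ifs with h
      · ring
      · simp
    simp only [h2, Finset.sum_add_distrib]
    rw [Finset.sum_comm (f := fun i j => if i < j then (s i j : RF k l) * zv j else 0),
      ← Finset.sum_add_distrib]
    simp only [← Finset.sum_add_distrib]
    have h3 : ∀ x y : Fin l,
        ((if x < y then (s x y : RF k l) * zv x else 0)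
          + (if y < x then (s y x : RF k l) * zv x else 0)) = (s x y : RF k l) * zv x := by
      intro x y
      rcases lt_trichotomy x y with h | h | h
      · simp [h, asymm h]
      · subst h; simp [hdiag x]
      · simp [h, asymm h, hsym x y]
    rw [Finset.sum_congr rfl fun x _ => Finset.sum_congr rfl fun y _ => h3 x y]
    refine Finset.sum_congr rfl fun x _ => ?_
    rw [← Finset.sum_mul]
    push_cast
    ring
  have hmain : DeltaStar D n π
      = (∑ i, ((n i + ∑ j, s i j : ℤ) : RF k l) * zv i) * π := by
    rw [DeltaStar, Finset.sum_add_distrib, hsum1, hA, Finset.mul_sum, Finset.sum_mul,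
      ← Finset.sum_add_distrib]
    refine Finset.sum_congr rfl fun i _ => ?_
    push_cast
    ring
  refine ⟨hmain, ?_⟩
  rw [hmain, mul_eq_zero]
  constructor
  · rintro (hzero | hzero)
    · intro i
      have := zv_linIndep (c := fun i => n i + ∑ j, s i j) hzero i
      omega
    · exact absurd hzero hπne
  · intro h
    left
    have hz : ∀ i, (n i + ∑ j, s i j : ℤ) = 0 := fun i => by rw [h i]; ring
    simp [hz]

end Griess
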